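/- Let Ψ̄ ∈ ℝ^{N×N} and S ∈ ℝ^{N×s} be matrices, λ, T > 0, and let Q = Ψ̄S [(Ψ̄S)ᵀ(Ψ̄S)]† (Ψ̄S)ᵀ be the orthogonal projection onto the column span of Ψ̄S. Suppose (1/2)(Ψ̄Ψ̄ᵀ + (λ/T)I_N) ⪯ Ψ̄SSᵀΨ̄ᵀ + (λ/T)I_N ⪯ (3/2)(Ψ̄Ψ̄ᵀ + (λ/T)I_N). Then Ψ̄Ψ̄ᵀ + (λ/T)I_N ⪯ 3 (QΨ̄(QΨ̄)ᵀ + (λ/T)I_N). -/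

import Mathlib

open Matrix

lemma smul_psd {n : ℕ} (c : ℝ) (hc : 0 ≤ c) (M : Matrix (Fin n) (Fin n) ℝ) (h : M.PosSemidef) :
    (c • M).PosSemidef := by
  constructor
  · show _ = _
    rw [conjTranspose_smul]
    rw [star_trivial, h.1.eq]
  · intro x
    exact (h.smul hc).2 x

lemma tmul_self_zero {m n : ℕ} (A : Matrix (Fin m) (Fin n) ℝ) (h : Aᵀ * A = 0) : A = 0 := by
  rw [← conjTranspose_eq_transpose_of_trivial] at h
  exact conjTranspose_mul_self_eq_zero.mp h


/-- If the Nyström sampling matrix `S` satisfies the two-sided spectral approximation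
`(1/2)(Ψ̄Ψ̄ᵀ + (λ/T)I) ⪯ Ψ̄SSᵀΨ̄ᵀ + (λ/T)I ⪯ (3/2)(Ψ̄Ψ̄ᵀ + (λ/T)I)`, then with
`Q = Ψ̄S[(Ψ̄S)ᵀ(Ψ̄S)]†(Ψ̄S)ᵀ` (the orthogonal projection onto the column span of `Ψ̄S`,
where `B` is the Moore–Penrose pseudoinverse of `(Ψ̄S)ᵀ(Ψ̄S)` characterized by the four
Penrose conditions), one has `Ψ̄Ψ̄ᵀ + (λ/T)I ⪯ 3(QΨ̄(QΨ̄)ᵀ + (λ/T)I)`. -/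
theorem stmt_9 {N s : ℕ} (Ψ : Matrix (Fin N) (Fin N) ℝ) (S : Matrix (Fin N) (Fin s) ℝ)
    (lam T : ℝ) (hlam : 0 < lam) (hT : 0 < T)
    (B : Matrix (Fin s) (Fin s) ℝ)
    (hB1 : (Ψ * S)ᵀ * (Ψ * S) * B * ((Ψ * S)ᵀ * (Ψ * S)) = (Ψ * S)ᵀ * (Ψ * S))
    (hB2 : B * ((Ψ * S)ᵀ * (Ψ * S)) * B = B)
    (hB3 : ((Ψ * S)ᵀ * (Ψ * S) * B)ᵀ = (Ψ * S)ᵀ * (Ψ * S) * B)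
    (hB4 : (B * ((Ψ * S)ᵀ * (Ψ * S)))ᵀ = B * ((Ψ * S)ᵀ * (Ψ * S)))
    (Q : Matrix (Fin N) (Fin N) ℝ) (hQ : Q = Ψ * S * B * (Ψ * S)ᵀ)
    (hlow : ((Ψ * S * Sᵀ * Ψᵀ + (lam / T) • 1) -
      (1 / 2 : ℝ) • (Ψ * Ψᵀ + (lam / T) • 1)).PosSemidef)
    (hup : ((3 / 2 : ℝ) • (Ψ * Ψᵀ + (lam / T) • 1) -
      (Ψ * S * Sᵀ * Ψᵀ + (lam / T) • 1)).PosSemidef) :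
    ((3 : ℝ) • ((Q * Ψ) * (Q * Ψ)ᵀ + (lam / T) • 1) -
      (Ψ * Ψᵀ + (lam / T) • 1)).PosSemidef := by
  set c : ℝ := lam / T with hc
  have hc0 : 0 ≤ c := le_of_lt (div_pos hlam hT)
  set P : Matrix (Fin N) (Fin s) ℝ := Ψ * S with hP
  set M : Matrix (Fin s) (Fin s) ℝ := Pᵀ * P with hM
  have hMsym : Mᵀ = M := by
    rw [hM, transpose_mul, transpose_transpose]
  have hMBM : M * B * M = M := hB1
  have hBMtM : (B * M)ᵀ * M = M := by
    have e : (M * (B * M))ᵀ = (B * M)ᵀ * M := by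
      rw [transpose_mul, hMsym]
    rw [← e, ← Matrix.mul_assoc, hMBM]
    exact hMsym
  -- key: P * (B * M) = P
  have hPBM : P * (B * M) = P := by
    have e1 : (P * (B * M))ᵀ * (P * (B * M)) = M := by
      rw [transpose_mul, Matrix.mul_assoc, ← Matrix.mul_assoc Pᵀ P, ← hM,
        ← Matrix.mul_assoc ((B * M)ᵀ) M, hBMtM, ← Matrix.mul_assoc, hMBM]
    have e2 : (P * (B * M))ᵀ * P = M := by
      rw [transpose_mul, Matrix.mul_assoc, ← hM, hBMtM]
    have e3 : Pᵀ * (P * (B * M)) = M := by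
      rw [← Matrix.mul_assoc, ← hM, ← Matrix.mul_assoc, hMBM]
    have hzero : (P * (B * M) - P)ᵀ * (P * (B * M) - P) = 0 := by
      rw [transpose_sub, Matrix.sub_mul, Matrix.mul_sub, Matrix.mul_sub, e1, e2, e3, ← hM]
      simp
    have := tmul_self_zero _ hzero
    rwa [sub_eq_zero] at this
  -- Q * P = P
  have hQP : Q * P = P := by
    rw [hQ, Matrix.mul_assoc, Matrix.mul_assoc, ← hM, hPBM]
  -- Q * Qᵀ = Qᵀ
  have hQQt : Q * Qᵀ = Qᵀ := by
    have e : Qᵀ = P * (Bᵀ * Pᵀ) := by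
      simp [hQ, transpose_mul, Matrix.mul_assoc]
    rw [e, ← Matrix.mul_assoc, hQP]
  have hQsym : Qᵀ = Q := by
    have e : (Q * Qᵀ)ᵀ = Q * Qᵀ := by rw [transpose_mul, transpose_transpose]
    calc Qᵀ = Q * Qᵀ := hQQt.symm
      _ = (Q * Qᵀ)ᵀ := e.symm
      _ = (Qᵀ)ᵀ := by rw [hQQt]
      _ = Q := transpose_transpose Q
  have hQQ : Q * Q = Q := by
    nth_rewrite 2 [← hQsym]
    rw [hQQt]
    exact hQsym
  -- 1 - Q is PSD
  have hIQ : (1 - Q : Matrix (Fin N) (Fin N) ℝ).PosSemidef := by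
    have e : (1 - Q : Matrix (Fin N) (Fin N) ℝ) = (1 - Q) * (1 - Q)ᴴ := by
      rw [conjTranspose_eq_transpose_of_trivial, transpose_sub, transpose_one, hQsym,
        Matrix.sub_mul, Matrix.mul_sub, Matrix.mul_sub, Matrix.one_mul, Matrix.one_mul,
        Matrix.mul_one, hQQ]
      abel
    rw [e]
    exact posSemidef_self_mul_conjTranspose _
  -- right-assoc helper identities
  have hQmul : ∀ (Z : Matrix (Fin s) (Fin N) ℝ), Q * (Ψ * (S * Z)) = Ψ * (S * Z) := by
    intro Z
    calc Q * (Ψ * (S * Z)) = (Q * (Ψ * S)) * Z := by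
          rw [Matrix.mul_assoc, Matrix.mul_assoc]
      _ = Ψ * (S * Z) := by rw [← hP, hQP, hP, Matrix.mul_assoc]
  have hStQ : Sᵀ * (Ψᵀ * Q) = Sᵀ * Ψᵀ := by
    have h := congrArg transpose hQP
    rw [transpose_mul, hQsym, hP, transpose_mul] at h
    rw [← Matrix.mul_assoc, h]
  -- conjugated upper bound is PSD
  have hconj : (Q * ((3 / 2 : ℝ) • (Ψ * Ψᵀ + c • 1) -
      (Ψ * S * Sᵀ * Ψᵀ + c • 1)) * Q).PosSemidef := by
    have h := hup.mul_mul_conjTranspose_same Q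
    rwa [conjTranspose_eq_transpose_of_trivial, hQsym] at h
  -- main algebraic identity
  have main : ((3 : ℝ) • ((Q * Ψ) * (Q * Ψ)ᵀ + c • 1) - (Ψ * Ψᵀ + c • 1)) =
      (2 : ℝ) • (Q * ((3 / 2 : ℝ) • (Ψ * Ψᵀ + c • 1) - (Ψ * S * Sᵀ * Ψᵀ + c • 1)) * Q) +
      ((2 : ℝ) • ((Ψ * S * Sᵀ * Ψᵀ + c • 1) - (1 / 2 : ℝ) • (Ψ * Ψᵀ + c • 1)) +
        c • (1 - Q)) := by
    simp only [transpose_mul, hQsym, mul_sub, sub_mul, mul_add, add_mul, smul_add, smul_sub,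
      mul_smul_comm, smul_mul_assoc, smul_smul, Matrix.mul_one, Matrix.one_mul,
      Matrix.mul_assoc, hQQ, hQmul, hStQ]
    module
  rw [main]
  exact ((smul_psd 2 (by norm_num) _ hconj).add
    ((smul_psd 2 (by norm_num) _ hlow).add (smul_psd c hc0 _ hIQ)))
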